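/- For integers n, m ≥ 3, the dual mutual-visibility number of the Cartesian product K_n □ K_m equals n + m − 1. -/

import Mathlib

namespace MutualVisibility

open SimpleGraph

variable {V W : Type*}

/-- `x` and `y` are `X`-visible in `G`: there is a shortest `x,y`-path all of whose
internal vertices avoid `X`. -/
def Visible (G : SimpleGraph V) (X : Set V) (x y : V) : Prop :=
  ∃ p : G.Walk x y, p.length = G.dist x y ∧ ∀ v ∈ p.support, v ≠ x → v ≠ y → v ∉ X

/-- `X` is a mutual-visibility set: any two vertices of `X` are `X`-visible. -/
def IsMutualVisSet (G : SimpleGraph V) (X : Set V) : Prop :=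
  ∀ x ∈ X, ∀ y ∈ X, Visible G X x y

/-- outer mutual-visibility set -/
def IsOuterMutualVisSet (G : SimpleGraph V) (X : Set V) : Prop :=
  IsMutualVisSet G X ∧ ∀ x ∈ X, ∀ y ∉ X, Visible G X x y

/-- dual mutual-visibility set -/
def IsDualMutualVisSet (G : SimpleGraph V) (X : Set V) : Prop :=
  IsMutualVisSet G X ∧ ∀ x ∉ X, ∀ y ∉ X, Visible G X x y

/-- total mutual-visibility set -/
def IsTotalMutualVisSet (G : SimpleGraph V) (X : Set V) : Prop :=
  ∀ x y : V, Visible G X x y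

/-- mutual-visibility number μ(G) -/
noncomputable def mu (G : SimpleGraph V) : ℕ :=
  sSup {k | ∃ X : Set V, IsMutualVisSet G X ∧ X.ncard = k}

/-- outer mutual-visibility number μ_o(G) -/
noncomputable def muOuter (G : SimpleGraph V) : ℕ :=
  sSup {k | ∃ X : Set V, IsOuterMutualVisSet G X ∧ X.ncard = k}

/-- dual mutual-visibility number μ_d(G) -/
noncomputable def muDual (G : SimpleGraph V) : ℕ :=
  sSup {k | ∃ X : Set V, IsDualMutualVisSet G X ∧ X.ncard = k}

/-- total mutual-visibility number μ_t(G) -/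
noncomputable def muTotal (G : SimpleGraph V) : ℕ :=
  sSup {k | ∃ X : Set V, IsTotalMutualVisSet G X ∧ X.ncard = k}

/-- `H` contains a subgraph copy of `F`. -/
def ContainsCopy (F : SimpleGraph W) (H : SimpleGraph V) : Prop :=
  ∃ f : W → V, Function.Injective f ∧ ∀ a b, F.Adj a b → H.Adj (f a) (f b)

/-- The Turán number ex(n; F): max number of edges of an `n`-vertex graph with no copy of `F`. -/
noncomputable def exNum (n : ℕ) (F : SimpleGraph W) : ℕ :=
  sSup {k | ∃ H : SimpleGraph (Fin n), ¬ ContainsCopy F H ∧ H.edgeSet.ncard = k}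

/-- The direct (tensor/categorical) product of graphs. -/
def directProd (G : SimpleGraph V) (H : SimpleGraph W) : SimpleGraph (V × W) where
  Adj x y := G.Adj x.1 y.1 ∧ H.Adj x.2 y.2
  symm := ⟨fun _ _ h => ⟨h.1.symm, h.2.symm⟩⟩
  loopless := ⟨fun x h => G.loopless.irrefl x.1 h.1⟩

/-- The join `G + H` of two graphs. -/
def graphJoin (G : SimpleGraph V) (H : SimpleGraph W) : SimpleGraph (V ⊕ W) where
  Adj u v := match u, v with
    | Sum.inl a, Sum.inl b => G.Adj a b
    | Sum.inr a, Sum.inr b => H.Adj a b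
    | _, _ => True
  symm := ⟨fun u v => match u, v with
    | Sum.inl _, Sum.inl _ => fun h => G.symm.symm _ _ h
    | Sum.inr _, Sum.inr _ => fun h => H.symm.symm _ _ h
    | Sum.inl _, Sum.inr _ => fun _ => trivial
    | Sum.inr _, Sum.inl _ => fun _ => trivial⟩
  loopless := ⟨fun u => match u with
    | Sum.inl a => G.loopless.irrefl a
    | Sum.inr a => H.loopless.irrefl a⟩

/-- A big-μ graph: `G = (K_1 ∪ K_t) + H` for some `t ≥ 0` and some graph `H`. -/
def IsBigMu {V : Type} (G : SimpleGraph V) : Prop :=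
  ∃ (t : ℕ) (W : Type) (H : SimpleGraph W),
    Nonempty (G ≃g graphJoin ((⊤ : SimpleGraph (Fin 1)) ⊕g (⊤ : SimpleGraph (Fin t))) H)

/-- A cograph: a graph with no induced path on four vertices. -/
def IsCograph (G : SimpleGraph V) : Prop :=
  ¬ ∃ f : Fin 4 → V, Function.Injective f ∧
      ∀ a b, (pathGraph 4).Adj a b ↔ G.Adj (f a) (f b)

/-- The Petersen graph, realized as the Kneser graph K(5,2). -/
def petersen : SimpleGraph {s : Finset (Fin 5) // s.card = 2} where
  Adj a b := Disjoint a.1 b.1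
  symm := ⟨fun _ _ h => h.symm⟩
  loopless := by
    constructor
    rintro ⟨s, hs⟩ (h : Disjoint s s)
    rw [disjoint_self, Finset.bot_eq_empty] at h
    subst h
    simp at hs

section KKAux

variable {n m : ℕ}

private abbrev KKG (n m : ℕ) : SimpleGraph (Fin n × Fin m) :=
  (⊤ : SimpleGraph (Fin n)) □ (⊤ : SimpleGraph (Fin m))

private lemma kk_adj {x y : Fin n × Fin m} :
    (KKG n m).Adj x y ↔ (x.1 = y.1 ∧ x.2 ≠ y.2) ∨ (x.2 = y.2 ∧ x.1 ≠ y.1) := by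
  rw [boxProd_adj]
  simp only [top_adj]
  tauto

private lemma kk_dist_two {x y : Fin n × Fin m} (h1 : x.1 ≠ y.1) (h2 : x.2 ≠ y.2) :
    (KKG n m).dist x y = 2 := by
  have had1 : (KKG n m).Adj x (x.1, y.2) := kk_adj.mpr (Or.inl ⟨rfl, h2⟩)
  have had2 : (KKG n m).Adj (x.1, y.2) y := kk_adj.mpr (Or.inr ⟨rfl, h1⟩)
  have hle : (KKG n m).dist x y ≤ 2 := by
    simpa using SimpleGraph.dist_le (Walk.cons had1 (Walk.cons had2 Walk.nil))
  have hne : x ≠ y := fun h => h1 (by rw [h])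
  have hreach : (KKG n m).Reachable x y := ⟨Walk.cons had1 (Walk.cons had2 Walk.nil)⟩
  have h0 : (KKG n m).dist x y ≠ 0 := by simp [hne, hreach]
  have h1' : (KKG n m).dist x y ≠ 1 := by
    rw [Ne, SimpleGraph.dist_eq_one_iff_adj, kk_adj]
    rintro (⟨h, -⟩ | ⟨h, -⟩)
    · exact h1 h
    · exact h2 h
  omega

private lemma visible_of_eq {G : SimpleGraph V} {X : Set V} {x y : V} (h : x = y) :
    Visible G X x y := by
  subst h
  refine ⟨Walk.nil, by simp [SimpleGraph.dist_self], ?_⟩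
  intro v hv hvx _
  simp at hv
  exact absurd hv hvx

private lemma visible_of_adj {G : SimpleGraph V} {X : Set V} {x y : V} (h : G.Adj x y) :
    Visible G X x y := by
  refine ⟨Walk.cons h Walk.nil, by simp [SimpleGraph.dist_eq_one_iff_adj.mpr h], ?_⟩
  intro v hv hvx hvy
  simp [Walk.support_cons] at hv
  rcases hv with rfl | rfl
  · exact absurd rfl hvx
  · exact absurd rfl hvy

private lemma kk_visible_iff {X : Set (Fin n × Fin m)} {x y : Fin n × Fin m} :
    Visible (KKG n m) X x y ↔
      (x.1 = y.1 ∨ x.2 = y.2 ∨ (x.1, y.2) ∉ X ∨ (y.1, x.2) ∉ X) := by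
  constructor
  · intro hv
    by_cases h1 : x.1 = y.1
    · exact Or.inl h1
    by_cases h2 : x.2 = y.2
    · exact Or.inr (Or.inl h2)
    right; right
    obtain ⟨p, hlen, hint⟩ := hv
    rw [kk_dist_two h1 h2] at hlen
    have ha1 : (KKG n m).Adj x (p.getVert 1) := by
      have := p.adj_getVert_succ (i := 0) (by omega)
      simpa [Walk.getVert_zero] using this
    have ha2 : (KKG n m).Adj (p.getVert 1) y := by
      have := p.adj_getVert_succ (i := 1) (by omega)
      rwa [show (1 + 1 : ℕ) = p.length from by omega, Walk.getVert_length] at this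
    have hzs : p.getVert 1 ∈ p.support :=
      Walk.mem_support_iff_exists_getVert.mpr ⟨1, rfl, by omega⟩
    have hzX : p.getVert 1 ∉ X :=
      hint _ hzs (fun h => (KKG n m).irrefl (h ▸ ha1)) (fun h => (KKG n m).irrefl (h ▸ ha2))
    rcases kk_adj.mp ha1 with ⟨e1, e2⟩ | ⟨e1, e2⟩ <;>
      rcases kk_adj.mp ha2 with ⟨f1, f2⟩ | ⟨f1, f2⟩
    · exact absurd (e1.trans f1) h1
    · exact Or.inl (by rwa [show (x.1, y.2) = p.getVert 1 from Prod.ext_iff.mpr ⟨e1, f1.symm⟩])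
    · exact Or.inr (by rwa [show (y.1, x.2) = p.getVert 1 from Prod.ext_iff.mpr ⟨f1.symm, e1⟩])
    · exact absurd (e1.trans f1) h2
  · intro h
    by_cases h1 : x.1 = y.1
    · by_cases h2 : x.2 = y.2
      · exact visible_of_eq (Prod.ext_iff.mpr ⟨h1, h2⟩)
      · exact visible_of_adj (kk_adj.mpr (Or.inl ⟨h1, h2⟩))
    by_cases h2 : x.2 = y.2
    · exact visible_of_adj (kk_adj.mpr (Or.inr ⟨h2, h1⟩))
    have key : ∀ z : Fin n × Fin m, (KKG n m).Adj x z → (KKG n m).Adj z y → z ∉ X →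
        Visible (KKG n m) X x y := by
      intro z ha hb hzX
      refine ⟨Walk.cons ha (Walk.cons hb Walk.nil), by simp [kk_dist_two h1 h2], ?_⟩
      intro v hv hvx hvy
      simp [Walk.support_cons] at hv
      rcases hv with rfl | rfl | rfl
      · exact absurd rfl hvx
      · exact hzX
      · exact absurd rfl hvy
    rcases h with h | h | h | h
    · exact absurd h h1
    · exact absurd h h2
    · exact key (x.1, y.2) (kk_adj.mpr (Or.inl ⟨rfl, h2⟩)) (kk_adj.mpr (Or.inr ⟨rfl, h1⟩)) h
    · exact key (y.1, x.2) (kk_adj.mpr (Or.inr ⟨rfl, h1⟩)) (kk_adj.mpr (Or.inl ⟨rfl, h2⟩)) h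

private lemma kk_ub (hn : 3 ≤ n) (hm : 3 ≤ m) {X : Set (Fin n × Fin m)}
    (h : IsDualMutualVisSet (KKG n m) X) : X.ncard ≤ n + m - 1 := by
  classical
  obtain ⟨hmv, hcomp⟩ := h
  have P1 : ∀ a c : Fin n, ∀ b d : Fin m, a ≠ c → b ≠ d → (a, b) ∈ X → (c, d) ∈ X →
      (a, d) ∉ X ∨ (c, b) ∉ X := by
    intro a c b d hac hbd hab hcd
    have := kk_visible_iff.mp (hmv _ hab _ hcd)
    rcases this with h | h | h | h
    · exact absurd h hac
    · exact absurd h hbd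
    · exact Or.inl h
    · exact Or.inr h
  have P2 : ∀ a c : Fin n, ∀ b d : Fin m, a ≠ c → b ≠ d → (a, b) ∈ X → (c, d) ∈ X →
      (a, d) ∈ X ∨ (c, b) ∈ X := by
    intro a c b d hac hbd hab hcd
    by_contra hcon
    push_neg at hcon
    have := kk_visible_iff.mp (hcomp _ hcon.1 _ hcon.2)
    rcases this with h | h | h | h
    · exact hac h
    · exact hbd h.symm
    · exact h hab
    · exact h hcd
  set F := X.toFinset with hF
  have hXF : X.ncard = F.card := Set.ncard_eq_toFinset_card' X
  set row : Fin n → Finset (Fin n × Fin m) := fun c => F.filter (fun p => p.1 = c) with hrow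
  have mem_row : ∀ (c : Fin n) (p : Fin n × Fin m), p ∈ row c ↔ p ∈ X ∧ p.1 = c := by
    intro c p
    simp [hrow, hF, Finset.mem_filter, Set.mem_toFinset]
  have hsum : F.card = ∑ c, (row c).card := by
    simp only [hrow]
    exact Finset.card_eq_sum_card_fiberwise (fun p _ => Finset.mem_univ _)
  have hrow_le : ∀ c, (row c).card ≤ m := by
    intro c
    have : (row c).card ≤ (Finset.univ : Finset (Fin m)).card := by
      apply Finset.card_le_card_of_injOn (fun p => p.2) (fun _ _ => Finset.mem_univ _)
      intro p hp q hq hpq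
      simp only [Finset.mem_coe] at hp hq
      have h1 := ((mem_row c p).mp hp).2
      have h2 := ((mem_row c q).mp hq).2
      exact Prod.ext_iff.mpr ⟨h1.trans h2.symm, hpq⟩
    simpa using this
  by_cases hr : ∀ c, (row c).card ≤ 1
  · have hle : F.card ≤ ∑ _c : Fin n, 1 := hsum ▸ Finset.sum_le_sum (fun c _ => hr c)
    simp at hle
    omega
  · push_neg at hr
    obtain ⟨a0, ha0⟩ := hr
    obtain ⟨a, -, hamax⟩ := Finset.exists_max_image Finset.univ (fun c => (row c).card)
      ⟨a0, Finset.mem_univ _⟩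
    have hage : 2 ≤ (row a).card := le_trans ha0 (hamax a0 (Finset.mem_univ _))
    have step1 : ∀ (c : Fin n) (d : Fin m), c ≠ a → (c, d) ∈ X → (a, d) ∈ X := by
      intro c d hca hXcd
      by_contra had
      have key : ∀ p ∈ row a, (c, p.2) ∈ row c ∧ p.2 ≠ d := by
        intro p hp
        obtain ⟨hpX, hpa⟩ := (mem_row a p).mp hp
        have hpX' : (a, p.2) ∈ X := by
          rwa [show ((a : Fin n), p.2) = p from Prod.ext_iff.mpr ⟨hpa.symm, rfl⟩]
        have hpd : p.2 ≠ d := fun hh => had (hh ▸ hpX')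
        have := P2 a c p.2 d (Ne.symm hca) hpd hpX' hXcd
        have hcp : (c, p.2) ∈ X := this.resolve_left had
        exact ⟨(mem_row c _).mpr ⟨hcp, rfl⟩, hpd⟩
      have hsub : (row a).image (fun p => (c, p.2)) ⊆ row c :=
        Finset.image_subset_iff.mpr (fun p hp => (key p hp).1)
      have hcard_img : ((row a).image (fun p => (c, p.2))).card = (row a).card := by
        apply Finset.card_image_of_injOn
        intro p hp q hq hpq
        simp only [Finset.mem_coe] at hp hq
        have h1 := ((mem_row a p).mp hp).2
        have h2 := ((mem_row a q).mp hq).2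
        have hsnd : p.2 = q.2 := (Prod.ext_iff.mp hpq).2
        exact Prod.ext_iff.mpr ⟨h1.trans h2.symm, hsnd⟩
      have hnotmem : (c, d) ∉ (row a).image (fun p => (c, p.2)) := by
        intro hmem
        rw [Finset.mem_image] at hmem
        obtain ⟨p, hp, heq⟩ := hmem
        exact (key p hp).2 (congrArg Prod.snd heq)
      have hbig : (row a).card + 1 ≤ (row c).card := by
        have hins : insert ((c : Fin n), d) ((row a).image fun p => (c, p.2)) ⊆ row c :=
          Finset.insert_subset ((mem_row c _).mpr ⟨hXcd, rfl⟩) hsub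
        have := Finset.card_le_card hins
        rw [Finset.card_insert_of_notMem hnotmem, hcard_img] at this
        omega
      have := hamax c (Finset.mem_univ _)
      omega
    have step2 : ∀ c : Fin n, c ≠ a → (row c).card ≤ 1 := by
      intro c hca
      rw [Finset.card_le_one]
      intro p hp q hq
      obtain ⟨hpX, hpc⟩ := (mem_row c p).mp hp
      obtain ⟨hqX, hqc⟩ := (mem_row c q).mp hq
      by_contra hne
      have hsne : p.2 ≠ q.2 := fun hh => hne (Prod.ext_iff.mpr ⟨hpc.trans hqc.symm, hh⟩)
      have hcp : ((c : Fin n), p.2) ∈ X := by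
        rwa [show ((c : Fin n), p.2) = p from Prod.ext_iff.mpr ⟨hpc.symm, rfl⟩]
      have hcq : ((c : Fin n), q.2) ∈ X := by
        rwa [show ((c : Fin n), q.2) = q from Prod.ext_iff.mpr ⟨hqc.symm, rfl⟩]
      have h1 : ((a : Fin n), p.2) ∈ X := step1 c p.2 hca hcp
      have h2 : ((a : Fin n), q.2) ∈ X := step1 c q.2 hca hcq
      rcases P1 a c p.2 q.2 (Ne.symm hca) hsne h1 hcq with hh | hh
      · exact hh h2
      · exact hh hcp
    have hfinal : F.card ≤ m + (n - 1) := by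
      rw [hsum, ← Finset.add_sum_erase _ _ (Finset.mem_univ a)]
      have hb : ∑ c ∈ Finset.univ.erase a, (row c).card ≤ ∑ _c ∈ Finset.univ.erase a, 1 :=
        Finset.sum_le_sum (fun c hc => step2 c (Finset.ne_of_mem_erase hc))
      have hcarderase : (Finset.univ.erase a).card = n - 1 := by
        rw [Finset.card_erase_of_mem (Finset.mem_univ _)]
        simp
      rw [Finset.sum_const, hcarderase, smul_eq_mul, mul_one] at hb
      have := hrow_le a
      omega
    omega
private lemma kk_lb (hn : 3 ≤ n) (hm : 3 ≤ m) :
    ∃ X : Set (Fin n × Fin m), IsDualMutualVisSet (KKG n m) X ∧ X.ncard = n + m - 1 := by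
  haveI : NeZero n := ⟨by omega⟩
  haveI : NeZero m := ⟨by omega⟩
  classical
  refine ⟨{p | p.1 = 0 ∨ p.2 = 0}, ⟨?_, ?_⟩, ?_⟩
  · intro x hx y hy
    rw [kk_visible_iff]
    simp only [Set.mem_setOf_eq] at hx hy
    by_cases h1 : x.1 = y.1
    · exact Or.inl h1
    by_cases h2 : x.2 = y.2
    · exact Or.inr (Or.inl h2)
    right; right
    rcases hx with hx | hx <;> rcases hy with hy | hy
    · exact absurd (hx.trans hy.symm) h1
    · right
      simp only [Set.mem_setOf_eq, not_or]
      exact ⟨fun hh => h1 (hx.trans hh.symm), fun hh => h2 (hh.trans hy.symm)⟩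
    · left
      simp only [Set.mem_setOf_eq, not_or]
      exact ⟨fun hh => h1 (hh.trans hy.symm), fun hh => h2 (hx.trans hh.symm)⟩
    · exact absurd (hx.trans hy.symm) h2
  · intro x hx y hy
    rw [kk_visible_iff]
    simp only [Set.mem_setOf_eq, not_or] at hx hy
    by_cases h1 : x.1 = y.1
    · exact Or.inl h1
    by_cases h2 : x.2 = y.2
    · exact Or.inr (Or.inl h2)
    right; right; left
    simp only [Set.mem_setOf_eq, not_or]
    exact ⟨hx.1, hy.2⟩
  · rw [Set.ncard_eq_toFinset_card']
    have hset : ({p : Fin n × Fin m | p.1 = 0 ∨ p.2 = 0} : Set _).toFinset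
        = (({0} : Finset (Fin n)) ×ˢ Finset.univ) ∪ (Finset.univ ×ˢ ({0} : Finset (Fin m))) := by
      ext p
      simp only [Set.mem_toFinset, Set.mem_setOf_eq, Finset.mem_union, Finset.mem_product,
        Finset.mem_singleton, Finset.mem_univ, and_true, true_and]
    rw [hset]
    have hco := Finset.card_union_add_card_inter
      (({0} : Finset (Fin n)) ×ˢ (Finset.univ : Finset (Fin m)))
      ((Finset.univ : Finset (Fin n)) ×ˢ ({0} : Finset (Fin m)))
    have hint : (({0} : Finset (Fin n)) ×ˢ (Finset.univ : Finset (Fin m))) ∩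
        ((Finset.univ : Finset (Fin n)) ×ˢ ({0} : Finset (Fin m)))
        = {((0 : Fin n), (0 : Fin m))} := by
      ext p
      simp only [Finset.mem_inter, Finset.mem_product, Finset.mem_singleton, Finset.mem_univ,
        and_true, true_and, Prod.ext_iff]
    have c1 : (({0} : Finset (Fin n)) ×ˢ (Finset.univ : Finset (Fin m))).card = m := by
      rw [Finset.card_product]; simp
    have c2 : ((Finset.univ : Finset (Fin n)) ×ˢ ({0} : Finset (Fin m))).card = n := by
      rw [Finset.card_product]; simp
    rw [hint, c1, c2, Finset.card_singleton] at hco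
    omega
end KKAux

theorem muDual_boxProd_complete (n m : ℕ) (hn : 3 ≤ n) (hm : 3 ≤ m) :
    muDual ((⊤ : SimpleGraph (Fin n)) □ (⊤ : SimpleGraph (Fin m))) = n + m - 1 := by
  obtain ⟨Y, hY, hYc⟩ := kk_lb hn hm
  have hub : ∀ k ∈ {k | ∃ X : Set (Fin n × Fin m),
      IsDualMutualVisSet (KKG n m) X ∧ X.ncard = k}, k ≤ n + m - 1 := by
    rintro k ⟨X, hX, rfl⟩
    exact kk_ub hn hm hX
  have hmem : (n + m - 1) ∈ {k | ∃ X : Set (Fin n × Fin m),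
      IsDualMutualVisSet (KKG n m) X ∧ X.ncard = k} := ⟨Y, hY, hYc⟩
  rw [muDual]
  exact le_antisymm (csSup_le ⟨_, hmem⟩ hub) (le_csSup ⟨n + m - 1, fun k hk => hub k hk⟩ hmem)
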